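/- arXiv:math/9904085 — 2 statements merged into one kernel-verified Lean document; each statement's English description precedes it below -/
import Mathlib

section
/- Let p₁(X,Y,Z) = X^N + Σ_{j=0}^{N-1} a_j(Y,Z) X^j and p₂(X,Y,Z) = Y^M + K(X,Y,Z) be formal power series in variables X, Y ∈ ℂ and Z = (Z',Z'') ∈ ℂ^{k'} × ℂ^{k''}, where each a_j is a formal power series in (Y,Z) with a_j(0,0) = 0, and K(X,Y,Z',0) = 0 identically. Then the ideal generated by p₁ and p₂ in the formal power series ring ℂ⟦X,Y,Z⟧ contains a power series of the form r(Y,Z) = Y^{M·N²} + K'(Y,Z) with K'(Y,Z',0) = 0 identically. -/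
noncomputable section

/-- Formal substitution: `substPS F g = g ∘ F`, well-defined (agreeing with the usual
substitution) when each `F j` has zero constant term. -/
noncomputable def substPS {σ τ : Type*} [Fintype σ] [DecidableEq σ]
    (F : σ → MvPowerSeries τ ℂ) (g : MvPowerSeries σ ℂ) : MvPowerSeries τ ℂ :=
  fun d =>
    MvPowerSeries.coeff d
      ((MvPolynomial.aeval F)
        (MvPowerSeries.trunc ℂ
          (Finsupp.equivFunOnFinite.symm fun _ => (d.sum fun _ v => v) + 1) g))

/-- Formal partial derivative of a multivariate formal power series. -/
noncomputable def pderivPS {σ : Type*} (i : σ) (f : MvPowerSeries σ ℂ) : MvPowerSeries σ ℂ :=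
  fun d => ((d i : ℂ) + 1) * MvPowerSeries.coeff (d + Finsupp.single i 1) f

/-- Setting the second group of variables equal to `0` in a formal power series. -/
noncomputable def setSnd0 {A B : Type*} (f : MvPowerSeries (A ⊕ B) ℂ) : MvPowerSeries A ℂ :=
  fun d => MvPowerSeries.coeff (Finsupp.mapDomain Sum.inl d) f

/-- A formal power series is convergent iff its coefficients grow at most geometrically. -/
def IsConvergentPS {σ : Type*} (f : MvPowerSeries σ ℂ) : Prop :=
  ∃ C r : ℝ, 0 < r ∧ ∀ d : σ →₀ ℕ, ‖MvPowerSeries.coeff d f‖ ≤ C * r ^ (d.sum fun _ v => v)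

end

open MvPowerSeries Finsupp Finset

section Proj
variable {σ : Type*} [DecidableEq σ]

noncomputable def projFun (P : (σ →₀ ℕ) → Prop) [DecidablePred P] (f : MvPowerSeries σ ℂ) : MvPowerSeries σ ℂ :=
  fun d => if P d then MvPowerSeries.coeff d f else 0

theorem coeff_projFun (P : (σ →₀ ℕ) → Prop) [DecidablePred P] (f : MvPowerSeries σ ℂ) (d : σ →₀ ℕ) :
    MvPowerSeries.coeff d (projFun P f) = if P d then MvPowerSeries.coeff d f else 0 := rfl

theorem projFun_mul (P : (σ →₀ ℕ) → Prop) [DecidablePred P]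
    (hPadd : ∀ e c : σ →₀ ℕ, P (e + c) ↔ P e ∧ P c) (f g : MvPowerSeries σ ℂ) :
    projFun P (f * g) = projFun P f * projFun P g := by
  apply MvPowerSeries.ext; intro d
  rw [coeff_projFun, MvPowerSeries.coeff_mul, MvPowerSeries.coeff_mul]
  by_cases hd : P d
  · rw [if_pos hd]
    refine Finset.sum_congr rfl fun p hp => ?_
    rw [Finset.HasAntidiagonal.mem_antidiagonal] at hp
    have h12 : P p.1 ∧ P p.2 := (hPadd p.1 p.2).1 (hp ▸ hd)
    rw [coeff_projFun, coeff_projFun, if_pos h12.1, if_pos h12.2]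
  · rw [if_neg hd, eq_comm]
    refine Finset.sum_eq_zero fun p hp => ?_
    rw [Finset.HasAntidiagonal.mem_antidiagonal] at hp
    rw [coeff_projFun, coeff_projFun]
    by_cases h1 : P p.1
    · by_cases h2 : P p.2
      · exact absurd ((hPadd p.1 p.2).2 ⟨h1, h2⟩) (hp ▸ hd)
      · rw [if_neg h2, mul_zero]
    · rw [if_neg h1, zero_mul]

/-- Projection killing all coefficients whose exponent does not satisfy `P`, as a ring hom. -/
noncomputable def projHom (P : (σ →₀ ℕ) → Prop) [DecidablePred P] (hP0 : P 0)
    (hPadd : ∀ e c : σ →₀ ℕ, P (e + c) ↔ P e ∧ P c) :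
    MvPowerSeries σ ℂ →+* MvPowerSeries σ ℂ where
  toFun := projFun P
  map_one' := by
    apply MvPowerSeries.ext; intro d
    rw [coeff_projFun, MvPowerSeries.coeff_one]
    by_cases hd : d = 0
    · subst hd; simp [hP0, MvPowerSeries.coeff_one]
    · simp [hd, MvPowerSeries.coeff_one]
  map_mul' := projFun_mul P hPadd
  map_zero' := by
    apply MvPowerSeries.ext; intro d
    rw [coeff_projFun]; simp
  map_add' f g := by
    apply MvPowerSeries.ext; intro d
    rw [map_add, coeff_projFun, coeff_projFun, coeff_projFun, map_add]
    by_cases hd : P d <;> simp [hd]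

theorem coeff_projHom (P : (σ →₀ ℕ) → Prop) [DecidablePred P] (hP0) (hPadd) (f : MvPowerSeries σ ℂ) (d : σ →₀ ℕ) :
    MvPowerSeries.coeff d (projHom P hP0 hPadd f) =
      if P d then MvPowerSeries.coeff d f else 0 := rfl

theorem projHom_eq_self (P : (σ →₀ ℕ) → Prop) [DecidablePred P] (hP0) (hPadd) (f : MvPowerSeries σ ℂ)
    (h : ∀ d, ¬ P d → MvPowerSeries.coeff d f = 0) : projHom P hP0 hPadd f = f := by
  apply MvPowerSeries.ext; intro d
  rw [coeff_projHom]
  by_cases hd : P d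
  · rw [if_pos hd]
  · rw [if_neg hd, eq_comm]; exact h d hd

theorem projHom_X (P : (σ →₀ ℕ) → Prop) [DecidablePred P] (hP0) (hPadd) (i : σ) (h : P (Finsupp.single i 1)) :
    projHom P hP0 hPadd (MvPowerSeries.X i) = MvPowerSeries.X i := by
  apply projHom_eq_self
  intro d hd
  rw [MvPowerSeries.coeff_X, if_neg]
  rintro rfl; exact hd h

end Proj

section Division
variable {σ : Type*} [DecidableEq σ] (x : σ)

noncomputable def mu (d : σ →₀ ℕ) : ℕ := (d.erase x).sum fun _ n => n

theorem mu_add (d e : σ →₀ ℕ) : mu x (d + e) = mu x d + mu x e := by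
  unfold mu
  rw [Finsupp.erase_add]
  exact Finsupp.sum_add_index' (fun _ => rfl) (fun _ _ _ => rfl)

theorem mu_single (m : ℕ) : mu x (Finsupp.single x m) = 0 := by
  unfold mu
  rw [Finsupp.erase_single]
  simp

theorem mu_add_single (d : σ →₀ ℕ) (m : ℕ) : mu x (d + Finsupp.single x m) = mu x d := by
  rw [mu_add, mu_single, add_zero]

theorem mu_tsub_single (d : σ →₀ ℕ) (m : ℕ) : mu x (d - Finsupp.single x m) = mu x d := by
  unfold mu
  congr 1
  ext i
  by_cases hi : i = x
  · subst hi; simp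
  · rw [Finsupp.erase_ne hi, Finsupp.erase_ne hi, Finsupp.tsub_apply,
      Finsupp.single_eq_of_ne' (Ne.symm hi)]
    omega

theorem mu_eq_zero (e : σ →₀ ℕ) (hx : e x = 0) (h : mu x e = 0) : e = 0 := by
  ext i
  by_cases hi : i = x
  · subst hi; simpa using hx
  · unfold mu at h
    rw [Finsupp.sum] at h
    rw [Finset.sum_eq_zero_iff] at h
    by_cases hs : i ∈ (e.erase x).support
    · have := h i hs
      rwa [Finsupp.erase_ne hi] at this
    · have : (e.erase x) i = 0 := Finsupp.notMem_support_iff.1 hs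
      rwa [Finsupp.erase_ne hi] at this

theorem mu_lt {e c D : σ →₀ ℕ} (h : e + c = D) (hex : e x = 0) (he : e ≠ 0) :
    mu x c < mu x D := by
  subst h
  rw [mu_add]
  have : mu x e ≠ 0 := fun h0 => he (mu_eq_zero x e hex h0)
  omega

theorem coeff_mul_X_pow' (g : MvPowerSeries σ ℂ) (n : ℕ) (d : σ →₀ ℕ) :
    MvPowerSeries.coeff d (g * MvPowerSeries.X x ^ n) =
      if Finsupp.single x n ≤ d then MvPowerSeries.coeff (d - Finsupp.single x n) g
      else 0 := by
  rw [MvPowerSeries.X_pow_eq, MvPowerSeries.coeff_mul_monomial]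
  by_cases h : Finsupp.single x n ≤ d <;> simp [h]

theorem coeff_mul_p (N : ℕ) (a : Fin N → MvPowerSeries σ ℂ)
    (ha0 : ∀ j, MvPowerSeries.coeff 0 (a j) = 0)
    (haX : ∀ j d, d x ≠ 0 → MvPowerSeries.coeff d (a j) = 0)
    (g : MvPowerSeries σ ℂ) (d : σ →₀ ℕ) (hd : N ≤ d x) :
    MvPowerSeries.coeff d
        (g * (MvPowerSeries.X x ^ N + ∑ j : Fin N, a j * MvPowerSeries.X x ^ (j : ℕ))) =
      MvPowerSeries.coeff (d - Finsupp.single x N) g +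
      ∑ j : Fin N, ∑ p ∈ (Finset.HasAntidiagonal.antidiagonal (d - Finsupp.single x (j : ℕ))).filter
          (fun p => p.1 ≠ 0 ∧ p.1 x = 0),
        MvPowerSeries.coeff p.1 (a j) * MvPowerSeries.coeff p.2 g := by
  rw [mul_add, map_add, coeff_mul_X_pow', if_pos (Finsupp.single_le_iff.2 hd)]
  congr 1
  rw [Finset.mul_sum, map_sum]
  refine Finset.sum_congr rfl fun j _ => ?_
  rw [show g * (a j * MvPowerSeries.X x ^ (j : ℕ)) = a j * g * MvPowerSeries.X x ^ (j : ℕ) by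
    ring]
  rw [coeff_mul_X_pow', if_pos (Finsupp.single_le_iff.2 (le_trans (le_of_lt j.2) hd)),
    MvPowerSeries.coeff_mul]
  refine (Finset.sum_filter_of_ne fun p hp hne => ⟨?_, ?_⟩).symm
  · intro h0
    exact hne (by rw [h0, ha0 j, zero_mul])
  · by_contra hx0
    exact hne (by rw [haX j p.1 hx0, zero_mul])

theorem coeff_rsum_high (N : ℕ) (r : Fin N → MvPowerSeries σ ℂ)
    (hr : ∀ k d, d x ≠ 0 → MvPowerSeries.coeff d (r k) = 0) (d : σ →₀ ℕ) (hd : N ≤ d x) :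
    MvPowerSeries.coeff d (∑ k : Fin N, r k * MvPowerSeries.X x ^ (k : ℕ)) = 0 := by
  rw [map_sum]
  refine Finset.sum_eq_zero fun k _ => ?_
  rw [coeff_mul_X_pow']
  by_cases h : Finsupp.single x (k : ℕ) ≤ d
  · rw [if_pos h]
    apply hr
    rw [Finsupp.tsub_apply, Finsupp.single_eq_same]
    have := k.2
    omega
  · rw [if_neg h]

theorem coeff_rsum_low (N : ℕ) (r : Fin N → MvPowerSeries σ ℂ)
    (hr : ∀ k d, d x ≠ 0 → MvPowerSeries.coeff d (r k) = 0) (k : Fin N) (d : σ →₀ ℕ)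
    (hd : d x = 0) :
    MvPowerSeries.coeff (d + Finsupp.single x (k : ℕ))
      (∑ m : Fin N, r m * MvPowerSeries.X x ^ (m : ℕ)) = MvPowerSeries.coeff d (r k) := by
  rw [map_sum, Finset.sum_eq_single k]
  · rw [coeff_mul_X_pow', if_pos (Finsupp.single_le_iff.2 (by
      rw [Finsupp.add_apply, Finsupp.single_eq_same, hd]; omega)), add_tsub_cancel_right]
  · intro m _ hm
    rw [coeff_mul_X_pow']
    by_cases h : Finsupp.single x (m : ℕ) ≤ d + Finsupp.single x (k : ℕ)
    · rw [if_pos h]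
      apply hr
      have hmk : (m : ℕ) ≤ (k : ℕ) := by
        have := Finsupp.single_le_iff.1 h
        rwa [Finsupp.add_apply, Finsupp.single_eq_same, hd, zero_add] at this
      have hne : (m : ℕ) ≠ (k : ℕ) := fun hc => hm (Fin.ext hc)
      rw [Finsupp.tsub_apply, Finsupp.add_apply, Finsupp.single_eq_same,
        Finsupp.single_eq_same, hd]
      omega
    · rw [if_neg h]
  · intro h
    exact absurd (Finset.mem_univ k) h

end Division

section Division2
variable {σ : Type*} [DecidableEq σ] (x : σ)

noncomputable def wq (N : ℕ) (a : Fin N → MvPowerSeries σ ℂ) (f : MvPowerSeries σ ℂ) :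
    (σ →₀ ℕ) → ℂ
  | d => MvPowerSeries.coeff (d + Finsupp.single x N) f -
      ∑ j : Fin N, ∑ p ∈ ((Finset.HasAntidiagonal.antidiagonal (d + Finsupp.single x (N - (j : ℕ)))).filter
          (fun p => p.1 ≠ 0 ∧ p.1 x = 0)).attach,
        MvPowerSeries.coeff p.1.1 (a j) * wq N a f p.1.2
  termination_by d => mu x d
  decreasing_by
    rename_i hp0
    have hp := p.2
    rw [Finset.mem_filter, Finset.HasAntidiagonal.mem_antidiagonal] at hp
    have h := mu_lt x hp.1 hp.2.2 hp.2.1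
    rwa [mu_add_single] at h

theorem wq_eq (N : ℕ) (a : Fin N → MvPowerSeries σ ℂ) (f : MvPowerSeries σ ℂ) (d : σ →₀ ℕ) :
    wq x N a f d = MvPowerSeries.coeff (d + Finsupp.single x N) f -
      ∑ j : Fin N, ∑ p ∈ ((Finset.HasAntidiagonal.antidiagonal (d + Finsupp.single x (N - (j : ℕ)))).filter
          (fun p => p.1 ≠ 0 ∧ p.1 x = 0)).attach,
        MvPowerSeries.coeff p.1.1 (a j) * wq x N a f p.1.2 := by
  conv_lhs => rw [wq]

noncomputable def wqS (N : ℕ) (a : Fin N → MvPowerSeries σ ℂ) (f : MvPowerSeries σ ℂ) :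
    MvPowerSeries σ ℂ := wq x N a f

theorem coeff_wqS (N : ℕ) (a : Fin N → MvPowerSeries σ ℂ) (f : MvPowerSeries σ ℂ)
    (c : σ →₀ ℕ) : MvPowerSeries.coeff c (wqS x N a f) = wq x N a f c := rfl

theorem coeff_q_mul_p (N : ℕ) (a : Fin N → MvPowerSeries σ ℂ)
    (ha0 : ∀ j, MvPowerSeries.coeff 0 (a j) = 0)
    (haX : ∀ j d, d x ≠ 0 → MvPowerSeries.coeff d (a j) = 0)
    (f : MvPowerSeries σ ℂ) (d : σ →₀ ℕ) (hd : N ≤ d x) :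
    MvPowerSeries.coeff d ((wqS x N a f) *
        (MvPowerSeries.X x ^ N + ∑ j : Fin N, a j * MvPowerSeries.X x ^ (j : ℕ))) =
      MvPowerSeries.coeff d f := by
  rw [coeff_mul_p x N a ha0 haX _ d hd]
  have h1 : MvPowerSeries.coeff (d - Finsupp.single x N) (wqS x N a f) =
      wq x N a f (d - Finsupp.single x N) := rfl
  rw [h1, wq_eq]
  have h2 : (d - Finsupp.single x N) + Finsupp.single x N = d :=
    tsub_add_cancel_of_le (Finsupp.single_le_iff.2 hd)
  have h3 : ∀ j : Fin N,
      (d - Finsupp.single x N) + Finsupp.single x (N - (j : ℕ)) =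
        d - Finsupp.single x (j : ℕ) := by
    intro j
    ext i
    by_cases hi : i = x
    · subst hi
      rw [Finsupp.add_apply, Finsupp.tsub_apply, Finsupp.tsub_apply, Finsupp.single_eq_same,
        Finsupp.single_eq_same, Finsupp.single_eq_same]
      have := j.2
      omega
    · rw [Finsupp.add_apply, Finsupp.tsub_apply, Finsupp.tsub_apply,
        Finsupp.single_eq_of_ne' (fun h => hi (h.symm)),
        Finsupp.single_eq_of_ne' (fun h => hi (h.symm)),
        Finsupp.single_eq_of_ne' (fun h => hi (h.symm))]
      omega
  have hS : (∑ j : Fin N, ∑ p ∈ ((Finset.HasAntidiagonal.antidiagonal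
        ((d - Finsupp.single x N) + Finsupp.single x (N - (j : ℕ)))).filter
        (fun p => p.1 ≠ 0 ∧ p.1 x = 0)).attach,
        MvPowerSeries.coeff p.1.1 (a j) * wq x N a f p.1.2)
      = ∑ j : Fin N, ∑ p ∈ (Finset.HasAntidiagonal.antidiagonal (d - Finsupp.single x (j : ℕ))).filter
          (fun p => p.1 ≠ 0 ∧ p.1 x = 0),
          MvPowerSeries.coeff p.1 (a j) * MvPowerSeries.coeff p.2 (wqS x N a f) := by
    refine Finset.sum_congr rfl fun j _ => ?_
    rw [Finset.sum_attach ((Finset.HasAntidiagonal.antidiagonal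
        ((d - Finsupp.single x N) + Finsupp.single x (N - (j : ℕ)))).filter
        (fun p => p.1 ≠ 0 ∧ p.1 x = 0))
        (fun p => MvPowerSeries.coeff p.1 (a j) * wq x N a f p.2), h3 j]
    rfl
  rw [h2, hS]
  ring

theorem wdiv (N : ℕ) (a : Fin N → MvPowerSeries σ ℂ)
    (ha0 : ∀ j, MvPowerSeries.coeff 0 (a j) = 0)
    (haX : ∀ j d, d x ≠ 0 → MvPowerSeries.coeff d (a j) = 0) (f : MvPowerSeries σ ℂ) :
    ∃ q : MvPowerSeries σ ℂ, ∃ r : Fin N → MvPowerSeries σ ℂ,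
      (∀ k d, d x ≠ 0 → MvPowerSeries.coeff d (r k) = 0) ∧
      f = q * (MvPowerSeries.X x ^ N + ∑ j : Fin N, a j * MvPowerSeries.X x ^ (j : ℕ)) +
        ∑ k : Fin N, r k * MvPowerSeries.X x ^ (k : ℕ) := by
  set p1 : MvPowerSeries σ ℂ :=
    MvPowerSeries.X x ^ N + ∑ j : Fin N, a j * MvPowerSeries.X x ^ (j : ℕ) with hp1
  set q : MvPowerSeries σ ℂ := wqS x N a f with hq
  let r : Fin N → MvPowerSeries σ ℂ := fun k =>
    (fun c => if c x = 0 then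
      MvPowerSeries.coeff (c + Finsupp.single x (k : ℕ)) (f - q * p1) else 0 :
      (σ →₀ ℕ) → ℂ)
  have hrX : ∀ k d, d x ≠ 0 → MvPowerSeries.coeff d (r k) = 0 := by
    intro k d hd
    show (if d x = 0 then _ else 0) = 0
    rw [if_neg hd]
  have hrc : ∀ (k : Fin N) (c : σ →₀ ℕ), c x = 0 →
      MvPowerSeries.coeff c (r k) =
        MvPowerSeries.coeff (c + Finsupp.single x (k : ℕ)) (f - q * p1) := by
    intro k c hc
    show (if c x = 0 then _ else 0) = _
    rw [if_pos hc]
  refine ⟨q, r, hrX, ?_⟩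
  apply MvPowerSeries.ext; intro d
  rw [map_add]
  by_cases hd : N ≤ d x
  · rw [coeff_rsum_high x N r hrX d hd, add_zero, hq, hp1,
      coeff_q_mul_p x N a ha0 haX f d hd]
  · push_neg at hd
    have hsp : Finsupp.single x (d x) ≤ d := Finsupp.single_le_iff.2 le_rfl
    have hd0 : (d - Finsupp.single x (d x)) x = 0 := by
      rw [Finsupp.tsub_apply, Finsupp.single_eq_same]; omega
    have h5 := coeff_rsum_low x N r hrX ⟨d x, hd⟩ (d - Finsupp.single x (d x)) hd0
    rw [tsub_add_cancel_of_le hsp] at h5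
    rw [h5, hrc _ _ hd0, tsub_add_cancel_of_le hsp, map_sub]
    ring

theorem wdiv_unique (N : ℕ) (a : Fin N → MvPowerSeries σ ℂ)
    (ha0 : ∀ j, MvPowerSeries.coeff 0 (a j) = 0)
    (haX : ∀ j d, d x ≠ 0 → MvPowerSeries.coeff d (a j) = 0)
    (q : MvPowerSeries σ ℂ) (r : Fin N → MvPowerSeries σ ℂ)
    (hrX : ∀ k d, d x ≠ 0 → MvPowerSeries.coeff d (r k) = 0)
    (h : q * (MvPowerSeries.X x ^ N + ∑ j : Fin N, a j * MvPowerSeries.X x ^ (j : ℕ)) +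
      ∑ k : Fin N, r k * MvPowerSeries.X x ^ (k : ℕ) = 0) :
    ∀ k, r k = 0 := by
  have hq : ∀ n (d : σ →₀ ℕ), mu x d = n → MvPowerSeries.coeff d q = 0 := by
    intro n
    induction n using Nat.strong_induction_on with
    | _ n ih =>
      intro d hdn
      have hDx : N ≤ (d + Finsupp.single x N) x := by
        rw [Finsupp.add_apply, Finsupp.single_eq_same]; omega
      have hD := congrArg (MvPowerSeries.coeff (d + Finsupp.single x N)) h
      rw [map_add, map_zero, coeff_rsum_high x N r hrX _ hDx, add_zero,
        coeff_mul_p x N a ha0 haX q _ hDx, add_tsub_cancel_right] at hD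
      have hz : ∀ j : Fin N, ∀ p ∈ (Finset.HasAntidiagonal.antidiagonal
          ((d + Finsupp.single x N) - Finsupp.single x (j : ℕ))).filter
          (fun p => p.1 ≠ 0 ∧ p.1 x = 0),
          MvPowerSeries.coeff p.1 (a j) * MvPowerSeries.coeff p.2 q = 0 := by
        intro j p hp
        rw [Finset.mem_filter, Finset.HasAntidiagonal.mem_antidiagonal] at hp
        have hlt := mu_lt x hp.1 hp.2.2 hp.2.1
        rw [mu_tsub_single, mu_add_single] at hlt
        rw [ih _ (hdn ▸ hlt) p.2 rfl, mul_zero]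
      rw [Finset.sum_congr rfl (fun j _ => Finset.sum_eq_zero (hz j)),
        Finset.sum_const_zero, add_zero] at hD
      exact hD
  have hq0 : q = 0 := MvPowerSeries.ext fun d => by rw [hq (mu x d) d rfl, map_zero]
  rw [hq0, zero_mul, zero_add] at h
  intro k
  apply MvPowerSeries.ext; intro d
  rw [map_zero]
  by_cases hdx : d x = 0
  · have h6 := coeff_rsum_low x N r hrX k d hdx
    rw [h, map_zero] at h6
    exact h6.symm
  · exact hrX k d hdx

end Division2

open MvPowerSeries in
/-- Lemma 3.7.  Variables: `Sum.inl 0 = X`, `Sum.inl 1 = Y`,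
`Sum.inr (Sum.inl _) = Z'`, `Sum.inr (Sum.inr _) = Z''`. -/
theorem stmt_0 (N M k' k'' : ℕ) (hN : 0 < N) (hM : 0 < M)
    (a : Fin N → MvPowerSeries (Fin 2 ⊕ (Fin k' ⊕ Fin k'')) ℂ)
    (K : MvPowerSeries (Fin 2 ⊕ (Fin k' ⊕ Fin k'')) ℂ)
    (ha0 : ∀ j, constantCoeff (a j) = 0)
    (haX : ∀ j (d : (Fin 2 ⊕ (Fin k' ⊕ Fin k'')) →₀ ℕ),
      d (Sum.inl 0) ≠ 0 → coeff d (a j) = 0)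
    (hK : ∀ d : (Fin 2 ⊕ (Fin k' ⊕ Fin k'')) →₀ ℕ,
      (∀ i : Fin k'', d (Sum.inr (Sum.inr i)) = 0) → coeff d K = 0) :
    ∃ K' : MvPowerSeries (Fin 2 ⊕ (Fin k' ⊕ Fin k'')) ℂ,
      (∀ d : (Fin 2 ⊕ (Fin k' ⊕ Fin k'')) →₀ ℕ,
        d (Sum.inl 0) ≠ 0 → coeff d K' = 0) ∧
      (∀ d : (Fin 2 ⊕ (Fin k' ⊕ Fin k'')) →₀ ℕ,
        (∀ i : Fin k'', d (Sum.inr (Sum.inr i)) = 0) → coeff d K' = 0) ∧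
      (X (Sum.inl 1)) ^ (M * N ^ 2) + K' ∈
        Ideal.span {(X (Sum.inl 0)) ^ N + ∑ j : Fin N, a j * (X (Sum.inl 0)) ^ (j : ℕ),
                    (X (Sum.inl 1)) ^ M + K} := by
  classical
  set p1 : MvPowerSeries (Fin 2 ⊕ (Fin k' ⊕ Fin k'')) ℂ :=
    X (Sum.inl 0) ^ N + ∑ j : Fin N, a j * X (Sum.inl 0) ^ (j : ℕ) with hp1def
  set p2 : MvPowerSeries (Fin 2 ⊕ (Fin k' ⊕ Fin k'')) ℂ := X (Sum.inl 1) ^ M + K with hp2def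
  have ha0' : ∀ j, MvPowerSeries.coeff 0 (a j) = 0 := fun j => by
    rw [MvPowerSeries.coeff_zero_eq_constantCoeff]; exact ha0 j
  let PX : ((Fin 2 ⊕ (Fin k' ⊕ Fin k'')) →₀ ℕ) → Prop := fun d => d (Sum.inl 0) = 0
  let PZ : ((Fin 2 ⊕ (Fin k' ⊕ Fin k'')) →₀ ℕ) → Prop :=
    fun d => ∀ i : Fin k'', d (Sum.inr (Sum.inr i)) = 0
  have hPX0 : PX 0 := by simp [PX]
  have hPXadd : ∀ e c, PX (e + c) ↔ PX e ∧ PX c := by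
    intro e c; simp only [PX, Finsupp.add_apply]; omega
  have hPZ0 : PZ 0 := by intro i; simp
  have hPZadd : ∀ e c, PZ (e + c) ↔ PZ e ∧ PZ c := by
    intro e c
    constructor
    · intro h
      constructor <;> intro i <;> have h9 := h i <;> rw [Finsupp.add_apply] at h9 <;> omega
    · rintro ⟨h1, h2⟩ i
      rw [Finsupp.add_apply, h1 i, h2 i]
  set π := projHom PX hPX0 hPXadd with hπdef
  set ρ := projHom PZ hPZ0 hPZadd with hρdef
  have hπXy : π (X (Sum.inl 1)) = X (Sum.inl 1) := by
    rw [hπdef]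
    exact projHom_X _ _ _ _ (by simp [PX, Finsupp.single_apply])
  have hρXy : ρ (X (Sum.inl 1)) = X (Sum.inl 1) := by
    rw [hρdef]
    exact projHom_X _ _ _ _ (fun i => by simp [Finsupp.single_apply])
  have hρXx : ρ (X (Sum.inl 0)) = X (Sum.inl 0) := by
    rw [hρdef]
    exact projHom_X _ _ _ _ (fun i => by simp [Finsupp.single_apply])
  have hρK : ρ K = 0 := by
    rw [hρdef]
    apply MvPowerSeries.ext; intro d
    rw [coeff_projHom]
    simp only [map_zero]
    by_cases hd : PZ d
    · rw [if_pos hd]; exact hK d hd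
    · rw [if_neg hd]
  choose q r hrX hdiv using fun j : Fin N =>
    wdiv (Sum.inl 0) N a ha0' haX (X (Sum.inl 0) ^ (j : ℕ) * K)
  have hρa0 : ∀ j, MvPowerSeries.coeff 0 (ρ (a j)) = 0 := fun j => by
    rw [hρdef, coeff_projHom, if_pos hPZ0]; exact ha0' j
  have hρaX : ∀ j d, d (Sum.inl 0) ≠ 0 → MvPowerSeries.coeff d (ρ (a j)) = 0 := by
    intro j d hd
    rw [hρdef, coeff_projHom]
    split_ifs with h
    · exact haX j d hd
    · rfl
  have hρrX : ∀ j k d, d (Sum.inl 0) ≠ 0 → MvPowerSeries.coeff d (ρ (r j k)) = 0 := by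
    intro j k d hd
    rw [hρdef, coeff_projHom]
    split_ifs with h
    · exact hrX j k d hd
    · rfl
  have hρr : ∀ j k, ρ (r j k) = 0 := by
    intro j
    apply wdiv_unique (Sum.inl 0) N (fun m => ρ (a m)) hρa0 hρaX (ρ (q j))
      (fun k => ρ (r j k)) (hρrX j)
    have h7 := congrArg ρ (hdiv j)
    simp only [map_add, map_mul, map_pow, map_sum, hρXx, hρK] at h7
    rw [mul_zero] at h7
    exact h7.symm
  let C : Matrix (Fin N) (Fin N) (MvPowerSeries (Fin 2 ⊕ (Fin k' ⊕ Fin k'')) ℂ) :=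
    fun j k => (if j = k then X (Sum.inl 1) ^ M else 0) + r j k
  have hC : ∀ j : Fin N, ∑ k : Fin N, C j k * X (Sum.inl 0) ^ (k : ℕ) =
      p2 * X (Sum.inl 0) ^ (j : ℕ) - p1 * q j := by
    intro j
    have h1 : ∑ k : Fin N, C j k * X (Sum.inl 0) ^ (k : ℕ)
        = (∑ k : Fin N, (if j = k then X (Sum.inl 1) ^ M else 0) * X (Sum.inl 0) ^ (k : ℕ))
          + ∑ k : Fin N, r j k * X (Sum.inl 0) ^ (k : ℕ) := by
      rw [← Finset.sum_add_distrib]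
      exact Finset.sum_congr rfl fun k _ => add_mul _ _ _
    have h2 : (∑ k : Fin N, (if j = k then (X (Sum.inl 1) : MvPowerSeries
          (Fin 2 ⊕ (Fin k' ⊕ Fin k'')) ℂ) ^ M else 0) * X (Sum.inl 0) ^ (k : ℕ))
        = X (Sum.inl 1) ^ M * X (Sum.inl 0) ^ (j : ℕ) := by
      have h2' := Finset.sum_eq_single_of_mem (s := (Finset.univ : Finset (Fin N)))
        (f := fun k : Fin N => (if j = k then (X (Sum.inl 1) : MvPowerSeries
          (Fin 2 ⊕ (Fin k' ⊕ Fin k'')) ℂ) ^ M else 0) * X (Sum.inl 0) ^ (k : ℕ))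
        j (Finset.mem_univ j)
        (fun k _ hk => by
          show (if j = k then (X (Sum.inl 1) : MvPowerSeries
            (Fin 2 ⊕ (Fin k' ⊕ Fin k'')) ℂ) ^ M else 0) * X (Sum.inl 0) ^ (k : ℕ) = 0
          rw [if_neg (fun h => hk h.symm), zero_mul])
      rw [h2']
      show (if j = j then (X (Sum.inl 1) : MvPowerSeries
        (Fin 2 ⊕ (Fin k' ⊕ Fin k'')) ℂ) ^ M else 0) * X (Sum.inl 0) ^ (j : ℕ) = _
      rw [if_pos rfl]
    have h3 : ∑ k : Fin N, r j k * X (Sum.inl 0) ^ (k : ℕ)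
        = X (Sum.inl 0) ^ (j : ℕ) * K - q j * p1 := by
      rw [← hp1def] at hdiv
      linear_combination (hdiv j).symm
    rw [h1, h2, h3, hp2def]
    ring
  have key : ∑ k : Fin N, C.adjugate ⟨0, hN⟩ k *
      (∑ m : Fin N, C k m * X (Sum.inl 0) ^ (m : ℕ)) = C.det := by
    simp only [Finset.mul_sum]
    rw [Finset.sum_comm]
    have hstep : ∀ m : Fin N, ∑ k : Fin N,
        C.adjugate ⟨0, hN⟩ k * (C k m * X (Sum.inl 0) ^ (m : ℕ))
        = ((C.adjugate * C) ⟨0, hN⟩ m) * X (Sum.inl 0) ^ (m : ℕ) := by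
      intro m
      rw [Matrix.mul_apply, Finset.sum_mul]
      exact Finset.sum_congr rfl fun k _ => (mul_assoc _ _ _).symm
    rw [Finset.sum_congr rfl fun m _ => hstep m, Matrix.adjugate_mul]
    have hstep2 : ∀ m : Fin N,
        ((C.det • (1 : Matrix (Fin N) (Fin N) (MvPowerSeries (Fin 2 ⊕ (Fin k' ⊕ Fin k'')) ℂ)))
          ⟨0, hN⟩ m) * X (Sum.inl 0) ^ (m : ℕ)
        = if (⟨0, hN⟩ : Fin N) = m then C.det * X (Sum.inl 0) ^ (m : ℕ) else 0 := by
      intro m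
      rw [Matrix.smul_apply, Matrix.one_apply]
      by_cases h : (⟨0, hN⟩ : Fin N) = m
      · rw [if_pos h, if_pos h, smul_eq_mul, mul_one]
      · rw [if_neg h, if_neg h, smul_eq_mul, mul_zero, zero_mul]
    rw [Finset.sum_congr rfl fun m _ => hstep2 m, Finset.sum_ite_eq]
    simp
  have hDmem : C.det ∈ Ideal.span {p1, p2} := by
    rw [← key]
    refine Ideal.sum_mem _ fun k _ => ?_
    rw [hC k, mul_sub]
    refine sub_mem ?_ ?_
    · rw [show C.adjugate ⟨0, hN⟩ k * (p2 * X (Sum.inl 0) ^ (k : ℕ))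
          = C.adjugate ⟨0, hN⟩ k * X (Sum.inl 0) ^ (k : ℕ) * p2 from by ring]
      exact Ideal.mul_mem_left _ _ (Ideal.subset_span (by simp))
    · rw [show C.adjugate ⟨0, hN⟩ k * (p1 * q k)
          = C.adjugate ⟨0, hN⟩ k * q k * p1 from by ring]
      exact Ideal.mul_mem_left _ _ (Ideal.subset_span (by simp))
  have hπr : ∀ j k, π (r j k) = r j k := fun j k => by
    rw [hπdef]
    exact projHom_eq_self _ _ _ _ (fun d hd => hrX j k d hd)
  have hπC : C.map π = C := by
    apply Matrix.ext; intro j k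
    rw [Matrix.map_apply]
    show π ((if j = k then X (Sum.inl 1) ^ M else 0) + r j k) = _
    rw [map_add, hπr j k]
    congr 1
    by_cases h : j = k
    · rw [if_pos h, map_pow, hπXy]
    · rw [if_neg h, map_zero]
  have hπD : π C.det = C.det := by rw [RingHom.map_det, RingHom.mapMatrix_apply, hπC]
  have hρC : C.map ρ = Matrix.diagonal (fun _ => X (Sum.inl 1) ^ M) := by
    apply Matrix.ext; intro j k
    rw [Matrix.map_apply, Matrix.diagonal_apply]
    show ρ ((if j = k then X (Sum.inl 1) ^ M else 0) + r j k) = _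
    rw [map_add, hρr j k, add_zero]
    by_cases h : j = k
    · rw [if_pos h, map_pow, hρXy]
    · rw [if_neg h, map_zero]
  have hρD : ρ C.det = X (Sum.inl 1) ^ (M * N) := by
    rw [RingHom.map_det, RingHom.mapMatrix_apply, hρC, Matrix.det_diagonal, Finset.prod_const, Finset.card_univ,
      Fintype.card_fin, ← pow_mul]
  have hMN : M * N ≤ M * N ^ 2 := by
    have h1 : N ≤ N ^ 2 := by nlinarith
    exact Nat.mul_le_mul_left M h1
  refine ⟨X (Sum.inl 1) ^ (M * N ^ 2 - M * N) * C.det - X (Sum.inl 1) ^ (M * N ^ 2), ?_, ?_, ?_⟩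
  · intro d hd
    have hfix : π (X (Sum.inl 1) ^ (M * N ^ 2 - M * N) * C.det - X (Sum.inl 1) ^ (M * N ^ 2))
        = X (Sum.inl 1) ^ (M * N ^ 2 - M * N) * C.det - X (Sum.inl 1) ^ (M * N ^ 2) := by
      simp only [map_sub, map_mul, map_pow]
      rw [hπXy, hπD]
    rw [← hfix, hπdef, coeff_projHom, if_neg]
    exact hd
  · intro d hd
    have hkill : ρ (X (Sum.inl 1) ^ (M * N ^ 2 - M * N) * C.det
        - X (Sum.inl 1) ^ (M * N ^ 2)) = 0 := by
      simp only [map_sub, map_mul, map_pow]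
      rw [hρXy, hρD, ← pow_add, show M * N ^ 2 - M * N + M * N = M * N ^ 2 from by omega,
        sub_self]
    have h8 := congrArg (MvPowerSeries.coeff d) hkill
    rw [hρdef, coeff_projHom, if_pos hd, map_zero] at h8
    exact h8
  · rw [show X (Sum.inl 1) ^ (M * N ^ 2) + (X (Sum.inl 1) ^ (M * N ^ 2 - M * N) * C.det
        - X (Sum.inl 1) ^ (M * N ^ 2)) = X (Sum.inl 1) ^ (M * N ^ 2 - M * N) * C.det from by
      ring]
    exact Ideal.mul_mem_left _ _ hDmem
end

section
/- Let M, M' be formal generic submanifolds of the same dimension through 0 in ℂ^N, given in normal coordinates Z = (z,w) ∈ ℂ^n × ℂ^d and Z' = (z',w'), and let H = (F,G) : (ℂ^N,0) → (ℂ^N,0) be a finite formal mapping sending M into M' (in particular G(z,0) = 0 by normality). Then the formal mapping z ↦ F(z,0) from (ℂ^n,0) to (ℂ^n,0) is again finite, i.e., the ideal generated by the components F₁(z,0),…,F_n(z,0) has finite codimension in ℂ⟦z⟧. -/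
section AuxStmt13

open MvPowerSeries Finsupp

variable {A B : Type*}

lemma my_coeff_setSnd0 (f : MvPowerSeries (A ⊕ B) ℂ) (e : A →₀ ℕ) :
    coeff e (setSnd0 f) = coeff (mapDomain Sum.inl e) f := rfl

lemma my_mapDomain_inl_inj : Function.Injective
    (mapDomain (Sum.inl : A → A ⊕ B) : (A →₀ ℕ) → (A ⊕ B →₀ ℕ)) :=
  mapDomain_injective Sum.inl_injective

lemma my_mapDomain_inl_eq_zero {e : A →₀ ℕ} :
    mapDomain (Sum.inl : A → A ⊕ B) e = 0 ↔ e = 0 :=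
  ⟨fun h => my_mapDomain_inl_inj (by simpa using h), fun h => by simp [h]⟩

lemma my_support_sub (P Q : (A ⊕ B) →₀ ℕ) (e : A →₀ ℕ)
    (h : P + Q = mapDomain Sum.inl e) : ↑P.support ⊆ Set.range (Sum.inl : A → A ⊕ B) := by
  intro x hx
  rcases x with a | b
  · exact ⟨a, rfl⟩
  · exfalso
    have h1 : P (Sum.inr b) + Q (Sum.inr b) = 0 := by
      have h2 := DFunLike.congr_fun h (Sum.inr b)
      rw [Finsupp.add_apply,
        Finsupp.mapDomain_notin_range e (Sum.inr b) (by simp)] at h2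
      exact h2
    have := Finsupp.mem_support_iff.mp hx
    omega

noncomputable def mySetSnd0Alg : MvPowerSeries (A ⊕ B) ℂ →ₐ[ℂ] MvPowerSeries A ℂ where
  toFun := setSnd0
  map_one' := by
    classical
    ext e
    rw [my_coeff_setSnd0, coeff_one, coeff_one]
    simp [my_mapDomain_inl_eq_zero]
  map_mul' := fun f g => by
    classical
    ext e
    rw [my_coeff_setSnd0, coeff_mul, coeff_mul]
    refine (Finset.sum_bij (fun p _ => (mapDomain Sum.inl p.1, mapDomain Sum.inl p.2)) ?_ ?_ ?_ ?_).symm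
    · rintro ⟨p, q⟩ hp
      simp only [Finset.HasAntidiagonal.mem_antidiagonal] at hp ⊢
      rw [← mapDomain_add, hp]
    · rintro ⟨p, q⟩ _ ⟨p', q'⟩ _ h
      simp only [Prod.mk.injEq] at h
      exact Prod.ext (my_mapDomain_inl_inj h.1) (my_mapDomain_inl_inj h.2)
    · rintro ⟨P, Q⟩ hPQ
      simp only [Finset.HasAntidiagonal.mem_antidiagonal] at hPQ
      have hP := my_support_sub P Q e hPQ
      have hQ := my_support_sub Q P e (by rwa [add_comm])
      refine ⟨(comapDomain Sum.inl P Sum.inl_injective.injOn,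
               comapDomain Sum.inl Q Sum.inl_injective.injOn), ?_, ?_⟩
      · simp only [Finset.HasAntidiagonal.mem_antidiagonal]
        apply my_mapDomain_inl_inj
        rw [mapDomain_add, mapDomain_comapDomain Sum.inl Sum.inl_injective P hP,
          mapDomain_comapDomain Sum.inl Sum.inl_injective Q hQ, hPQ]
      · simp only [Prod.mk.injEq]
        exact ⟨mapDomain_comapDomain Sum.inl Sum.inl_injective P hP,
          mapDomain_comapDomain Sum.inl Sum.inl_injective Q hQ⟩
    · rintro ⟨p, q⟩ _
      rfl
  map_zero' := rfl
  map_add' := fun f g => rfl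
  commutes' := fun c => by
    classical
    ext e
    rw [my_coeff_setSnd0]
    show coeff _ (C c) = coeff e (C c)
    rw [coeff_C, coeff_C]
    simp [my_mapDomain_inl_eq_zero]

lemma my_setSnd0_surj : Function.Surjective (setSnd0 : MvPowerSeries (A ⊕ B) ℂ → MvPowerSeries A ℂ) := by
  classical
  intro g
  refine ⟨(fun E => if h : ↑E.support ⊆ Set.range (Sum.inl : A → A ⊕ B)
    then coeff (comapDomain Sum.inl E Sum.inl_injective.injOn) g else 0 : MvPowerSeries (A ⊕ B) ℂ), ?_⟩
  ext e
  have hsupp : ↑(mapDomain (Sum.inl : A → A ⊕ B) e).support ⊆ Set.range (Sum.inl : A → A ⊕ B) := by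
    intro x hx
    have := Finsupp.mapDomain_support hx
    simp only [Finset.coe_image, Finset.mem_image] at this
    obtain ⟨a, _, rfl⟩ := this
    exact ⟨a, rfl⟩
  show (if h : _ then _ else _) = _
  rw [dif_pos hsupp]
  have : comapDomain (Sum.inl : A → A ⊕ B) (mapDomain Sum.inl e) Sum.inl_injective.injOn = e :=
    my_mapDomain_inl_inj (mapDomain_comapDomain Sum.inl Sum.inl_injective _ hsupp)
  rw [this]


end AuxStmt13

open MvPowerSeries in
/-- from Lemma 6.1.  Variables: `Sum.inl = z`, `Sum.inr = w`;
`F`, `G` are the components of a finite formal map in normal coordinates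
(so `G (z,0) = 0`), and `z ↦ F (z,0)` is again finite. -/
theorem stmt_13 (n d : ℕ)
    (F : Fin n → MvPowerSeries (Fin n ⊕ Fin d) ℂ)
    (G : Fin d → MvPowerSeries (Fin n ⊕ Fin d) ℂ)
    (hF0 : ∀ j, constantCoeff (F j) = 0)
    (hG0 : ∀ j, constantCoeff (G j) = 0)
    (hfin : FiniteDimensional ℂ
      (MvPowerSeries (Fin n ⊕ Fin d) ℂ ⧸
        Ideal.span (Set.range F ∪ Set.range G)))
    (hGz0 : ∀ j, setSnd0 (G j) = 0) :
    FiniteDimensional ℂ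
      (MvPowerSeries (Fin n) ℂ ⧸
        Ideal.span (Set.range fun j => setSnd0 (F j))) := by
  classical
  set I := Ideal.span (Set.range F ∪ Set.range G) with hI
  set J := Ideal.span (Set.range fun j => setSnd0 (F j)) with hJ
  have hmem : ∀ a ∈ I, ((Ideal.Quotient.mkₐ ℂ J).comp mySetSnd0Alg) a = 0 := by
    have hIJ : I ≤ J.comap (mySetSnd0Alg :
        MvPowerSeries (Fin n ⊕ Fin d) ℂ →ₐ[ℂ] MvPowerSeries (Fin n) ℂ).toRingHom := by
      rw [hI, Ideal.span_le]
      rintro x (⟨j, rfl⟩ | ⟨j, rfl⟩)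
      · exact Ideal.subset_span ⟨j, rfl⟩
      · show mySetSnd0Alg (G j) ∈ J
        have : mySetSnd0Alg (G j) = setSnd0 (G j) := rfl
        rw [this, hGz0 j]
        exact J.zero_mem
    intro a ha
    have h3 : mySetSnd0Alg a ∈ J := hIJ ha
    show Ideal.Quotient.mk J (mySetSnd0Alg a) = 0
    exact Ideal.Quotient.eq_zero_iff_mem.mpr h3
  let ψ := Ideal.Quotient.liftₐ I ((Ideal.Quotient.mkₐ ℂ J).comp mySetSnd0Alg) hmem
  have hsurj : Function.Surjective ψ := by
    intro x
    obtain ⟨y, rfl⟩ := Ideal.Quotient.mkₐ_surjective ℂ J x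
    obtain ⟨z, rfl⟩ := my_setSnd0_surj (B := Fin d) y
    exact ⟨Ideal.Quotient.mk I z, by simp only [ψ, Ideal.Quotient.liftₐ_apply, Ideal.Quotient.lift_mk]; rfl⟩
  exact Module.Finite.of_surjective ψ.toLinearMap hsurj
end
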